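/- Let m ≥ 1 and let φ ∈ (1,2] be a real root of ρ^m − ρ^{m−1} − 1. If ρ is any complex root of this polynomial with ρ ≠ φ and ρ̄ (its conjugate, also a root), then |ρ| < φ; i.e., φ is the unique root of maximal modulus. -/

import Mathlib

/-- φ ∈ (1,2] real root of ρ^m − ρ^{m−1} − 1; any complex root ρ ≠ φ has |ρ| < φ. -/
theorem dominant_root (m : ℕ) (hm : 1 ≤ m) (φ : ℝ) (hφ : φ ∈ Set.Ioc (1 : ℝ) 2)
    (hroot : φ ^ m - φ ^ (m - 1) - 1 = 0)
    (ρ : ℂ) (hρ : ρ ^ m - ρ ^ (m - 1) - 1 = 0) (hne : ρ ≠ (φ : ℂ)) :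
    ‖ρ‖ < φ := by
  obtain ⟨hφ1, hφ2⟩ := hφ
  obtain ⟨n, rfl⟩ : ∃ n, m = n + 1 := ⟨m - 1, (Nat.succ_pred_eq_of_pos hm).symm⟩
  simp only [Nat.add_sub_cancel] at hroot hρ
  rcases Nat.eq_zero_or_pos n with rfl | hn
  · -- m = 1 case: ρ = 2 = φ, contradiction
    simp only [zero_add, pow_one, pow_zero] at hroot hρ
    have hφ2' : φ = 2 := by linarith
    have : ρ = 2 := by linear_combination hρ
    exact absurd (by rw [this, hφ2']; push_cast; ring) hne
  · have hφ0 : (0:ℝ) < φ := by linarith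
    have hρeq : ρ ^ (n+1) = ρ ^ n + 1 := by linear_combination hρ
    have hφeq : φ ^ (n+1) = φ ^ n + 1 := by linarith
    have hr : ‖ρ‖ ^ (n+1) ≤ ‖ρ‖ ^ n + 1 := by
      calc ‖ρ‖ ^ (n+1) = ‖ρ ^ n + 1‖ := by rw [← norm_pow, hρeq]
        _ ≤ ‖ρ ^ n‖ + ‖(1:ℂ)‖ := norm_add_le _ _
        _ = ‖ρ‖ ^ n + 1 := by rw [norm_pow, norm_one]
    by_contra hcon
    push_neg at hcon
    rcases eq_or_lt_of_le hcon with heq | hlt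
    · -- Complex.abs ρ = φ : equality case
      have habs : ‖ρ ^ n + 1‖ = ‖ρ ^ n‖ + 1 := by
        have h1 : ‖ρ ^ n + 1‖ = ‖ρ‖ ^ (n+1) := by
          rw [← hρeq, norm_pow]
        rw [h1, norm_pow, ← heq, hφeq, heq]
      have hre : (ρ ^ n).re = ‖ρ ^ n‖ := by
        have e1 := Complex.sq_norm (ρ ^ n + 1)
        have e2 := Complex.sq_norm (ρ ^ n)
        have e3 : Complex.normSq (ρ ^ n + 1) = ((ρ^n).re + 1)^2 + (ρ^n).im^2 := by
          simp [Complex.normSq_apply]; ring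
        have e4 : Complex.normSq (ρ ^ n) = (ρ^n).re^2 + (ρ^n).im^2 := by
          simp [Complex.normSq_apply]; ring
        nlinarith [norm_nonneg (ρ ^ n)]
      have him2 : (ρ ^ n).im ^ 2 = 0 := by
        have e2 := Complex.sq_norm (ρ ^ n)
        have e4 : Complex.normSq (ρ ^ n) = (ρ^n).re^2 + (ρ^n).im^2 := by
          simp [Complex.normSq_apply]; ring
        have e5 : (ρ ^ n).re ^ 2 = ‖ρ ^ n‖ ^ 2 := by rw [hre]
        linarith
      have him : (ρ ^ n).im = 0 := (pow_eq_zero_iff two_ne_zero).mp him2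
      have habsz : ‖ρ ^ n‖ = φ ^ n := by
        rw [norm_pow, ← heq]
      have hzreal : ρ ^ n = ((φ ^ n : ℝ) : ℂ) := by
        apply Complex.ext
        · simp [hre, habsz, ← Complex.ofReal_pow]
        · simp [him, ← Complex.ofReal_pow]
      have hφnC : ((φ ^ n : ℝ) : ℂ) ≠ 0 :=
        Complex.ofReal_ne_zero.mpr (pow_pos hφ0 n).ne'
      have h5 : ρ * ρ ^ n = ρ ^ n + 1 := by
        rw [pow_succ] at hρeq; linear_combination hρeq
      have hc : (φ:ℂ) ^ (n+1) = (φ:ℂ) ^ n + 1 := by exact_mod_cast hφeq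
      have hmain : ρ * ((φ ^ n : ℝ) : ℂ) = (φ : ℂ) * ((φ ^ n : ℝ) : ℂ) := by
        rw [← hzreal, h5, hzreal]
        push_cast
        linear_combination -hc
      exact hne (mul_right_cancel₀ hφnC hmain)
    · -- φ < Complex.abs ρ : strict monotonicity contradiction
      have hpow : φ ^ n < ‖ρ‖ ^ n := pow_lt_pow_left₀ hlt hφ0.le hn.ne'
      have h1 : ‖ρ‖ ^ (n+1) = ‖ρ‖ * ‖ρ‖ ^ n := by ring
      have h2 : φ ^ (n+1) = φ * φ ^ n := by ring
      have hφn : (0:ℝ) < φ ^ n := pow_pos hφ0 n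
      nlinarith [mul_pos (sub_pos.mpr hlt) hφn]
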